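/- arXiv:2207.08884 — 6 statements merged into one kernel-verified Lean document; each statement's English description precedes it below -/
import Mathlib

section
/- Let G be a finite directed graph with a distinguished root, and suppose nodes u and v are 'behaviourally equivalent' in the sense that there is a graph isomorphism between the subgraphs reachable from u and from v mapping u to v. Then redirecting all edges into v to point to u, and deleting nodes no longer reachable from the root, yields a graph in which every finite path from the root in the original graph corresponds (under the isomorphism applied at each redirection) to a path from the root in the new graph with the same sequence of edge labels up to the node relabelling. -/
/-- Reachability in a labelled directed graph. -/
def ReachFrom {V L : Type*} (E : V → L → V → Prop) (u : V) : V → Prop :=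
  Relation.ReflTransGen (fun a b => ∃ l, E a l b) u

/-- Finite labelled paths in a directed graph. -/
inductive EPath {V L : Type*} (E : V → L → V → Prop) : V → List L → V → Prop
  | nil (v : V) : EPath E v [] v
  | cons {a : V} {l : L} {b : V} {ls : List L} {c : V} :
      E a l b → EPath E b ls c → EPath E a (l :: ls) c

/-- The graph obtained by redirecting every edge into `v` so that it points to
`u` instead (nodes unreachable from the root may then be deleted, which does not
affect paths from the root). -/
def Redirect {V L : Type*} (E : V → L → V → Prop) (u v : V) : V → L → V → Prop :=
  fun a l b => (E a l b ∧ b ≠ v) ∨ (E a l v ∧ b = u)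

/-- Iterated version of the one-step isomorphism property, assuming the
`u`-reachable set is closed under `M`. -/
lemma iso_iter {V L : Type*} (E : V → L → V → Prop) (u : V) (M : V → V)
    (hiso : ∀ x, ReachFrom E u x → ∀ l y, E x l y ↔ E (M x) l (M y))
    (hclo : ∀ x, ReachFrom E u x → ReachFrom E u (M x)) :
    ∀ n x, ReachFrom E u x → ∀ l y, E x l y ↔ E (M^[n] x) l (M^[n] y) := by
  intro n
  induction n with
  | zero => simp
  | succ n ih =>
      intro x hx l y
      rw [Function.iterate_succ_apply, Function.iterate_succ_apply]
      exact (hiso x hx l y).trans (ih (M x) (hclo x hx) l (M y))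

/-- If the subgraphs reachable from `u` and from `v` are isomorphic via a
bijective node-renaming `M` with `M u = v`, then every finite path from the
root `r` in the original graph corresponds to a path from `r` in the graph
obtained by redirecting all edges into `v` to point to `u`, with the same
sequence of edge labels. -/
theorem stmt3 {V L : Type*} [Finite V] (E : V → L → V → Prop) (r u v : V) (M : V → V)
    (hbij : Function.Bijective M) (huv : M u = v) (hrv : r ≠ v)
    (hiso : ∀ x, ReachFrom E u x → ∀ l y, E x l y ↔ E (M x) l (M y))
    (hMreach : ∀ x, ReachFrom E u x → ReachFrom E v (M x)) :
    ∀ (ls : List L) (w : V), EPath E r ls w →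
      ∃ w', EPath (Redirect E u v) r ls w' := by
  -- The simulation invariant.
  set P : V → V → Prop := fun a w' =>
    (w' = a ∧ a ≠ v) ∨ (∃ k, ReachFrom E u w' ∧ M^[k+1] w' = a ∧ (1 ≤ k → ReachFrom E u v))
    with hP
  -- One-step simulation.
  have step : ∀ a l b w', P a w' → E a l b →
      ∃ w'', Redirect E u v w' l w'' ∧ P b w'' := by
    intro a l b w' hPa hE
    rcases hPa with ⟨rfl, hav⟩ | ⟨k, hreach, hMk, hcond⟩
    · by_cases hb : b = v
      · subst hb
        refine ⟨u, Or.inr ⟨hE, rfl⟩, Or.inr ⟨0, Relation.ReflTransGen.refl, ?_, ?_⟩⟩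
        · simpa using huv
        · omega
      · exact ⟨b, Or.inl ⟨hE, hb⟩, Or.inl ⟨rfl, hb⟩⟩
    · subst hMk
      obtain ⟨z, hz⟩ := (hbij.iterate (k+1)).surjective b
      subst hz
      have hEz : E w' l z := by
        cases Nat.eq_zero_or_pos k with
        | inl hk =>
            subst hk
            exact (hiso w' hreach l z).mpr (by simpa using hE)
        | inr hk =>
            have hv := hcond hk
            have hclo : ∀ x, ReachFrom E u x → ReachFrom E u (M x) := fun x hx =>
              Relation.ReflTransGen.trans hv (hMreach x hx)
            exact (iso_iter E u M hiso hclo (k+1) w' hreach l z).mpr hE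
      have hzreach : ReachFrom E u z := hreach.tail ⟨l, hEz⟩
      by_cases hzv : z = v
      · subst hzv
        refine ⟨u, Or.inr ⟨hEz, rfl⟩, Or.inr ⟨k+1, Relation.ReflTransGen.refl, ?_, fun _ => hzreach⟩⟩
        rw [Function.iterate_succ_apply, huv]
      · exact ⟨z, Or.inl ⟨hEz, hzv⟩, Or.inr ⟨k, hzreach, rfl, hcond⟩⟩
  -- Lift the one-step simulation to paths.
  have main : ∀ (ls : List L) (a w : V), EPath E a ls w → ∀ w', P a w' →
      ∃ w'', EPath (Redirect E u v) w' ls w'' := by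
    intro ls a w hpath
    induction hpath with
    | nil x => exact fun w' _ => ⟨w', EPath.nil w'⟩
    | cons hE _ ih =>
        intro w' hPw'
        obtain ⟨w'', hedge, hP2⟩ := step _ _ _ _ hPw' hE
        obtain ⟨w''', hrest⟩ := ih w'' hP2
        exact ⟨w''', EPath.cons hedge hrest⟩
  intro ls w hpath
  exact main ls r w hpath r (Or.inl ⟨rfl, hrv⟩)
end

section
/- If two networks N and N' are equivalent via a bijective process-renaming M (every process p of N has main behaviour B iff M(p) has main behaviour M(B)), then for any transition N →λ N'' there is a transition N' →M(λ) N''' such that N'' and N''' are equivalent via M, where M(λ) renames all process names in λ. -/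
/-- Process behaviours: send, receive, selection, branching, conditional, and
termination. `P` are process names, `L` labels for selections, `E` expressions. -/
inductive Behaviour (P L E : Type*) where
  | nil : Behaviour P L E
  | send : P → E → Behaviour P L E → Behaviour P L E
  | recv : P → Behaviour P L E → Behaviour P L E
  | sel : P → L → Behaviour P L E → Behaviour P L E
  | branch : P → (L → Behaviour P L E) → Behaviour P L E
  | cond : E → Behaviour P L E → Behaviour P L E → Behaviour P L E

/-- Renaming all process names occurring in a behaviour along `M`. -/
def Behaviour.rename {P L E : Type*} (M : P ≃ P) : Behaviour P L E → Behaviour P L E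
  | nil => nil
  | send p e B => send (M p) e (B.rename M)
  | recv p B => recv (M p) (B.rename M)
  | sel p l B => sel (M p) l (B.rename M)
  | branch p Bs => branch (M p) (fun l => (Bs l).rename M)
  | cond e B1 B2 => cond e (B1.rename M) (B2.rename M)

/-- Transition labels, recording the processes and action involved. -/
inductive NLabel (P L E : Type*) where
  | com : P → E → P → NLabel P L E
  | sel : P → P → L → NLabel P L E
  | tthen : P → E → NLabel P L E
  | telse : P → E → NLabel P L E

/-- Renaming process names in a transition label. -/
def NLabel.rename {P L E : Type*} (M : P ≃ P) : NLabel P L E → NLabel P L E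
  | com p e q => com (M p) e (M q)
  | sel p q l => sel (M p) (M q) l
  | tthen p e => tthen (M p) e
  | telse p e => telse (M p) e

/-- Network transitions: communication, selection, and conditional steps. -/
inductive NStep {P L E : Type*} [DecidableEq P] :
    (P → Behaviour P L E) → NLabel P L E → (P → Behaviour P L E) → Prop
  | com {N : P → Behaviour P L E} {p q : P} {e : E} {B1 B2 : Behaviour P L E} :
      p ≠ q → N p = .send q e B1 → N q = .recv p B2 →
      NStep N (.com p e q) (Function.update (Function.update N p B1) q B2)
  | sel {N : P → Behaviour P L E} {p q : P} {l : L} {B : Behaviour P L E}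
      {Bs : L → Behaviour P L E} :
      p ≠ q → N p = .sel q l B → N q = .branch p Bs →
      NStep N (.sel p q l) (Function.update (Function.update N p B) q (Bs l))
  | tthen {N : P → Behaviour P L E} {p : P} {e : E} {B1 B2 : Behaviour P L E} :
      N p = .cond e B1 B2 → NStep N (.tthen p e) (Function.update N p B1)
  | telse {N : P → Behaviour P L E} {p : P} {e : E} {B1 B2 : Behaviour P L E} :
      N p = .cond e B1 B2 → NStep N (.telse p e) (Function.update N p B2)

/-- If `N` and `N'` are equivalent via a bijective process-renaming `M`, then
any transition of `N` is matched by a transition of `N'` with the renamed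
label, resulting in networks again equivalent via `M`. -/
theorem stmt4 {P L E : Type*} [DecidableEq P] (M : P ≃ P)
    (N N' : P → Behaviour P L E)
    (hequiv : ∀ p, N' (M p) = (N p).rename M)
    (lab : NLabel P L E) (N'' : P → Behaviour P L E)
    (hstep : NStep N lab N'') :
    ∃ N''', NStep N' (lab.rename M) N''' ∧ ∀ p, N''' (M p) = (N'' p).rename M := by
  cases hstep with
  | @com p q e B1 B2 hne h1 h2 =>
    refine ⟨_, NStep.com (fun h => hne (M.injective h))
      (by rw [hequiv, h1]; rfl) (by rw [hequiv, h2]; rfl), ?_⟩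
    intro r
    rcases eq_or_ne r q with rfl | hrq
    · simp [Function.update_self]
    · rcases eq_or_ne r p with rfl | hrp
      · rw [Function.update_of_ne (fun h => hrq (M.injective h)),
          Function.update_self, Function.update_of_ne hrq, Function.update_self]
      · rw [Function.update_of_ne (fun h => hrq (M.injective h)),
          Function.update_of_ne (fun h => hrp (M.injective h)),
          Function.update_of_ne hrq, Function.update_of_ne hrp, hequiv]
  | @sel p q l B Bs hne h1 h2 =>
    refine ⟨_, NStep.sel (fun h => hne (M.injective h))
      (by rw [hequiv, h1]; rfl) (by rw [hequiv, h2]; rfl), ?_⟩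
    intro r
    rcases eq_or_ne r q with rfl | hrq
    · simp [Function.update_self]
    · rcases eq_or_ne r p with rfl | hrp
      · rw [Function.update_of_ne (fun h => hrq (M.injective h)),
          Function.update_self, Function.update_of_ne hrq, Function.update_self]
      · rw [Function.update_of_ne (fun h => hrq (M.injective h)),
          Function.update_of_ne (fun h => hrp (M.injective h)),
          Function.update_of_ne hrq, Function.update_of_ne hrp, hequiv]
  | @tthen p e B1 B2 h1 =>
    refine ⟨_, NStep.tthen (by rw [hequiv, h1]; rfl), ?_⟩
    intro r
    rcases eq_or_ne r p with rfl | hrp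
    · simp [Function.update_self]
    · rw [Function.update_of_ne (fun h => hrp (M.injective h)),
        Function.update_of_ne hrp, hequiv]
  | @telse p e B1 B2 h1 =>
    refine ⟨_, NStep.telse (by rw [hequiv, h1]; rfl), ?_⟩
    intro r
    rcases eq_or_ne r p with rfl | hrp
    · simp [Function.update_self]
    · rw [Function.update_of_ne (fun h => hrp (M.injective h)),
        Function.update_of_ne hrp, hequiv]
end

section
/- Let labels be equipped with a function pn giving the finite set of process names involved. If λ and λ' satisfy pn(λ) ∩ pn(λ') = ∅, and in the choreography semantics transitions with label λ only modify/inspect the state and connection-graph entries of processes in pn(λ), then executing λ then λ' from a configuration reaches the same configuration as executing λ' then λ. -/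
/-- A configuration: a state assigning values to processes, together with a
connection graph (a set of unordered pairs of processes). -/
structure Config (P V : Type*) where
  st : P → V
  G : Set (Sym2 P)

/-- An unordered edge lies entirely within a set of processes. -/
def Within {P : Type*} (s : Finset P) (e : Sym2 P) : Prop := ∀ p ∈ e, p ∈ s

/-- Locality of the action of label `l`: its definedness and effect depend only
on the state of the processes in `pn l` and the edges within `pn l`, and it
modifies only those. -/
def LocalAct {P V Λ : Type*} (pn : Λ → Finset P)
    (act : Λ → Config P V → Option (Config P V)) (l : Λ) : Prop :=
  (∀ c c' : Config P V,
    (∀ p ∈ pn l, c.st p = c'.st p) →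
    (∀ e : Sym2 P, Within (pn l) e → (e ∈ c.G ↔ e ∈ c'.G)) →
    ((act l c).isSome ↔ (act l c').isSome) ∧
    ∀ d d', act l c = some d → act l c' = some d' →
      (∀ p ∈ pn l, d.st p = d'.st p) ∧
      (∀ e : Sym2 P, Within (pn l) e → (e ∈ d.G ↔ e ∈ d'.G))) ∧
  (∀ c d, act l c = some d →
    (∀ p ∉ pn l, d.st p = c.st p) ∧
    (∀ e : Sym2 P, ¬ Within (pn l) e → (e ∈ d.G ↔ e ∈ c.G)))

private lemma Config.ext' {P V : Type*} {c c' : Config P V}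
    (h1 : c.st = c'.st) (h2 : c.G = c'.G) : c = c' := by
  cases c; cases c'; cases h1; cases h2; rfl

private lemma key {P V Λ : Type*} (pn : Λ → Finset P)
    (act : Λ → Config P V → Option (Config P V)) (l l' : Λ)
    (hl : LocalAct pn act l) (hl' : LocalAct pn act l')
    (hdisj : Disjoint (pn l) (pn l')) :
    ∀ c d, (act l c).bind (act l') = some d → (act l' c).bind (act l) = some d := by
  intro c d hcd
  cases hc1 : act l c with
  | none => simp [hc1] at hcd
  | some d1 =>
    rw [hc1, Option.bind_some] at hcd
    have hnb : ∀ e : Sym2 P, Within (pn l) e → Within (pn l') e → False := by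
      intro e h1 h2
      induction e using Sym2.ind with
      | _ x y =>
        exact Finset.disjoint_left.mp hdisj (h1 x (Sym2.mem_mk_left x y))
          (h2 x (Sym2.mem_mk_left x y))
    have hout1 := hl.2 c d1 hc1
    have hstd1c : ∀ p ∈ pn l', d1.st p = c.st p :=
      fun p hp => hout1.1 p (Finset.disjoint_right.mp hdisj hp)
    have hGd1c : ∀ e, Within (pn l') e → (e ∈ d1.G ↔ e ∈ c.G) :=
      fun e he => hout1.2 e (fun hw => hnb e hw he)
    have B := hl'.1 d1 c hstd1c hGd1c
    have hsome : (act l' c).isSome := B.1.mp (by rw [hcd]; rfl)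
    obtain ⟨d1', hd1'⟩ := Option.isSome_iff_exists.mp hsome
    have hout2 := hl'.2 c d1' hd1'
    have hstcd1' : ∀ p ∈ pn l, c.st p = d1'.st p :=
      fun p hp => (hout2.1 p (Finset.disjoint_left.mp hdisj hp)).symm
    have hGcd1' : ∀ e, Within (pn l) e → (e ∈ c.G ↔ e ∈ d1'.G) :=
      fun e he => (hout2.2 e (fun hw => hnb e he hw)).symm
    have A := hl.1 c d1' hstcd1' hGcd1'
    have hsome2 : (act l d1').isSome := A.1.mp (by rw [hc1]; rfl)
    obtain ⟨d', hd'⟩ := Option.isSome_iff_exists.mp hsome2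
    have Ain := A.2 d1 d' hc1 hd'
    have Bin := B.2 d d1' hcd hd1'
    have hout3 := hl'.2 d1 d hcd
    have hout4 := hl.2 d1' d' hd'
    have hst : d'.st = d.st := by
      funext p
      by_cases hpl : p ∈ pn l
      · exact (Ain.1 p hpl).symm.trans
          (hout3.1 p (Finset.disjoint_left.mp hdisj hpl)).symm
      · by_cases hpl' : p ∈ pn l'
        · exact (hout4.1 p hpl).trans (Bin.1 p hpl').symm
        · exact ((hout4.1 p hpl).trans (hout2.1 p hpl')).trans
            ((hout1.1 p hpl).symm.trans (hout3.1 p hpl').symm)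
    have hG : d'.G = d.G := by
      ext e
      by_cases hwl : Within (pn l) e
      · exact ((Ain.2 e hwl).symm.trans
          (hout3.2 e (fun hw => hnb e hwl hw)).symm)
      · by_cases hwl' : Within (pn l') e
        · exact (hout4.2 e hwl).trans (Bin.2 e hwl').symm
        · exact ((hout4.2 e hwl).trans (hout2.2 e hwl')).trans
            ((hout1.2 e hwl).symm.trans (hout3.2 e hwl').symm)
    rw [hd1', Option.bind_some, hd']
    exact congrArg some (Config.ext' hst hG)

/-- Executing two local actions whose sets of involved processes are disjoint
commutes: either composition is defined iff the other is, and both reach the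
same configuration. -/
theorem stmt7 {P V Λ : Type*} (pn : Λ → Finset P)
    (act : Λ → Config P V → Option (Config P V)) (l l' : Λ)
    (hl : LocalAct pn act l) (hl' : LocalAct pn act l')
    (hdisj : Disjoint (pn l) (pn l')) :
    ∀ c : Config P V, (act l c).bind (act l') = (act l' c).bind (act l) := by
  intro c
  cases h : (act l c).bind (act l') with
  | none =>
    cases h' : (act l' c).bind (act l) with
    | none => rfl
    | some d =>
      have := key pn act l' l hl' hl hdisj.symm c d h'
      rw [h] at this
      exact absurd this (by simp)
  | some d => exact (key pn act l l' hl hl' hdisj c d h).symm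
end

section
/- In the unrolled graph obtained from a finite rooted directed graph by splitting loop nodes into entry and exit nodes, every maximal path starting from an entry node (or from the root) is finite and ends either at a node of out-degree zero inherited from the original graph or at an exit node. -/
open Classical in
/-- In-degree of a node in an edge set of a labelled directed multigraph. -/
noncomputable def indeg {V L : Type*} (E : Finset (V × L × V)) (v : V) : ℕ :=
  (E.filter (fun e => e.2.2 = v)).card

/-- A loop node: a node with in-degree at least 2, or the root if it has any
incoming edge. -/
def IsLoopNode {V L : Type*} (E : Finset (V × L × V)) (r v : V) : Prop :=
  2 ≤ indeg E v ∨ (v = r ∧ 1 ≤ indeg E v)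

open Classical in
/-- Unrolling: every loop node `v` is split into an entry node `Sum.inl v`
(keeping `v`'s outgoing edges) and an exit node `Sum.inr v` (receiving `v`'s
incoming edges, with no outgoing edges). Non-loop nodes `w` are kept as
`Sum.inl w`. -/
noncomputable def unroll {V L : Type*} (E : Finset (V × L × V)) (r : V) :
    Finset ((V ⊕ V) × L × (V ⊕ V)) :=
  E.image (fun e => (Sum.inl e.1, e.2.1,
    if IsLoopNode E r e.2.2 then Sum.inr e.2.2 else Sum.inl e.2.2))

/-- Finite labelled paths along a finite edge set. -/
inductive FPath {V L : Type*} (E : Finset (V × L × V)) : V → List L → V → Prop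
  | nil (v : V) : FPath E v [] v
  | cons {a : V} {l : L} {b : V} {ls : List L} {c : V} :
      (a, l, b) ∈ E → FPath E b ls c → FPath E a (l :: ls) c

/-- In the unrolled graph, every maximal path starting from an entry node (or
from the root) is finite — there is no infinite path from the start node — and
it ends either at a node that had out-degree zero in the original graph or at
an exit node. -/
theorem stmt9 {V L : Type*} [Fintype V] [DecidableEq V] [DecidableEq L]
    (E : Finset (V × L × V)) (r : V)
    (hreach : ∀ v : V, Relation.ReflTransGen (fun a b => ∃ l, (a, l, b) ∈ E) r v)
    (start : V) (hstart : IsLoopNode E r start ∨ start = r) :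
    (¬ ∃ f : ℕ → (V ⊕ V), f 0 = Sum.inl start ∧
        ∀ i, ∃ l, (f i, l, f (i + 1)) ∈ unroll E r) ∧
    (∀ (ls : List L) (x : V ⊕ V), FPath (unroll E r) (Sum.inl start) ls x →
      (∀ (l : L) (y : V ⊕ V), (x, l, y) ∉ unroll E r) →
      (∃ v, x = Sum.inr v) ∨ (∃ w, x = Sum.inl w ∧ ∀ (l : L) (y : V), (w, l, y) ∉ E)) := by
  constructor
  · rintro ⟨f, hf0, hf⟩
    have step : ∀ i, ∃ v w lab, f i = Sum.inl v ∧
        (IsLoopNode E r w → f (i+1) = Sum.inr w) ∧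
        (¬ IsLoopNode E r w → f (i+1) = Sum.inl w) ∧ (v, lab, w) ∈ E := by
      intro i
      obtain ⟨lab, hl⟩ := hf i
      simp only [unroll, Finset.mem_image, Prod.mk.injEq] at hl
      obtain ⟨e, he, h1, h2, h3⟩ := hl
      by_cases hloop : IsLoopNode E r e.2.2
      · rw [if_pos hloop] at h3
        exact ⟨e.1, e.2.2, e.2.1, h1.symm, fun _ => h3.symm,
          fun hn => absurd hloop hn, he⟩
      · rw [if_neg hloop] at h3
        exact ⟨e.1, e.2.2, e.2.1, h1.symm, fun hl => absurd hl hloop,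
          fun _ => h3.symm, he⟩
    choose v w lab hv hw1 hw2 he using step
    have hnl : ∀ i, ¬ IsLoopNode E r (w i) := by
      intro i hloop
      have h1 : f (i+1) = Sum.inr (w i) := hw1 i hloop
      rw [hv (i+1)] at h1
      exact Sum.inl_ne_inr h1
    have hwv : ∀ i, w i = v (i+1) := by
      intro i
      have h1 : f (i+1) = Sum.inl (w i) := hw2 i (hnl i)
      rw [hv (i+1)] at h1
      exact (Sum.inl.inj h1).symm
    have hedge : ∀ i, (v i, lab i, v (i+1)) ∈ E := by
      intro i; rw [← hwv i]; exact he i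
    have hnl' : ∀ i, ¬ IsLoopNode E r (v (i+1)) := by
      intro i; rw [← hwv i]; exact hnl i
    have hedge' : ∀ k, 1 ≤ k → (v (k-1), lab (k-1), v k) ∈ E := by
      intro k hk
      have h1 := hedge (k-1)
      rwa [Nat.sub_add_cancel hk] at h1
    have hnlk : ∀ k, 1 ≤ k → ¬ IsLoopNode E r (v k) := by
      intro k hk
      have h1 := hnl' (k-1)
      rwa [Nat.sub_add_cancel hk] at h1
    have hpos : ∀ k, 1 ≤ k → 1 ≤ indeg E (v k) := by
      intro k hk
      unfold indeg
      exact Finset.card_pos.mpr ⟨(v (k-1), lab (k-1), v k),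
        by simp [Finset.mem_filter, hedge' k hk]⟩
    have hne_r : ∀ k, 1 ≤ k → v k ≠ r := by
      intro k hk hr
      exact hnlk k hk (Or.inr ⟨hr, hpos k hk⟩)
    have hin : ∀ k, 1 ≤ k → ∀ b lb, (b, lb, v k) ∈ E → b = v (k-1) := by
      intro k hk b lb hb
      have hcard : indeg E (v k) ≤ 1 := by
        by_contra hcon
        exact hnlk k hk (Or.inl (by omega))
      unfold indeg at hcard
      have heq := Finset.card_le_one.mp hcard (b, lb, v k)
        (by simp [Finset.mem_filter, hb]) (v (k-1), lab (k-1), v k)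
        (by simp [Finset.mem_filter, hedge' k hk])
      exact congrArg Prod.fst heq
    have key : ∀ i j : ℕ, 1 ≤ i → i < j → v i = v j → False := by
      intro i j hi hij hgij
      set C : Set V := {c | ∃ k, i ≤ k ∧ k < j ∧ v k = c} with hC
      have hpred : ∀ c ∈ C, ∃ k, i ≤ k ∧ k < j ∧ v (k+1) = c ∧ v k ∈ C := by
        rintro c ⟨k, hik, hkj, rfl⟩
        rcases Nat.eq_or_lt_of_le hik with h | h
        · refine ⟨j-1, by omega, by omega, ?_, ⟨j-1, by omega, by omega, rfl⟩⟩
          rw [Nat.sub_add_cancel (by omega), ← hgij, ← h]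
        · exact ⟨k-1, by omega, by omega, by rw [Nat.sub_add_cancel (by omega)],
            ⟨k-1, by omega, by omega, rfl⟩⟩
      have main : ∀ c, Relation.ReflTransGen (fun a b => ∃ l, (a, l, b) ∈ E) r c → c ∉ C := by
        intro c h
        induction h with
        | refl =>
          rintro ⟨k, hik, hkj, hgk⟩
          exact hne_r k (by omega) hgk
        | tail hab hbc ih =>
          intro hc
          obtain ⟨k, hik, hkj, hgk, hgkC⟩ := hpred _ hc
          obtain ⟨lb, hlb⟩ := hbc
          have hb := hin (k+1) (by omega) _ lb (by rw [hgk]; exact hlb)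
          simp only [Nat.add_sub_cancel] at hb
          rw [hb] at ih
          exact ih hgkC
      exact main (v i) (hreach (v i)) ⟨i, le_refl _, hij, rfl⟩
    obtain ⟨m, n, hmn, hgmn⟩ := Finite.exists_ne_map_eq_of_infinite (fun n : ℕ => v (n+1))
    rcases hmn.lt_or_gt with h | h
    · exact key (m+1) (n+1) (by omega) (by omega) hgmn
    · exact key (n+1) (m+1) (by omega) (by omega) hgmn.symm
  · intro ls x hpath hmax
    rcases x with u | u
    · refine Or.inr ⟨u, rfl, fun l y hy => ?_⟩
      by_cases hl : IsLoopNode E r y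
      · refine hmax l (Sum.inr y) ?_
        simp only [unroll, Finset.mem_image]
        exact ⟨(u, l, y), hy, by simp [hl]⟩
      · refine hmax l (Sum.inl y) ?_
        simp only [unroll, Finset.mem_image]
        exact ⟨(u, l, y), hy, by simp [hl]⟩
    · exact Or.inl ⟨u, rfl⟩
end

section
/- If every transition of a network strictly decreases or preserves a multiset measure assigning to each process the size of its current behaviour (with procedure unfolding bounded by a fixed finite set of definitions, and no spawn actions), then the symbolic execution of a spawn-free network visits only finitely many distinct networks up to renaming. -/
/-- Behaviours over process names `P`, selection labels `L`, expressions `E`,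
and procedure names `X` (no spawn actions). -/
inductive Beh (P L E X : Type*) where
  | nil : Beh P L E X
  | send : P → E → Beh P L E X → Beh P L E X
  | recv : P → Beh P L E X → Beh P L E X
  | sel : P → L → Beh P L E X → Beh P L E X
  | branch : P → List (L × Beh P L E X) → Beh P L E X
  | cond : E → Beh P L E X → Beh P L E X → Beh P L E X
  | call : X → Beh P L E X

/-- One step from a behaviour to a continuation: either take an immediate
subterm (continuation of a send/receive/selection, a branch, or a branch of a
conditional), or unfold a procedure call using the finite set `D` of
definitions. -/
inductive BStep {P L E X : Type*} (D : X → Beh P L E X) :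
    Beh P L E X → Beh P L E X → Prop
  | send {p e B} : BStep D (.send p e B) B
  | recv {p B} : BStep D (.recv p B) B
  | sel {p l B} : BStep D (.sel p l B) B
  | branch {p bs l B} : (l, B) ∈ bs → BStep D (.branch p bs) B
  | condT {e B1 B2} : BStep D (.cond e B1 B2) B1
  | condF {e B1 B2} : BStep D (.cond e B1 B2) B2
  | unfold {x} : BStep D (.call x) (D x)

def subs {P L E X : Type*} : Beh P L E X → List (Beh P L E X)
  | .nil => [.nil]
  | .send p e B => .send p e B :: subs B
  | .recv p B => .recv p B :: subs B
  | .sel p l B => .sel p l B :: subs B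
  | .branch p bs => .branch p bs :: bs.attach.flatMap (fun lb => subs lb.1.2)
  | .cond e B1 B2 => .cond e B1 B2 :: (subs B1 ++ subs B2)
  | .call x => [.call x]
decreasing_by
  all_goals simp
  all_goals try omega
  have h1 := List.sizeOf_lt_of_mem lb.2
  obtain ⟨⟨l, b⟩, hm⟩ := lb
  simp at h1 ⊢
  omega

theorem self_mem_subs {P L E X : Type*} (a : Beh P L E X) : a ∈ subs a := by
  cases a <;> simp [subs]

theorem subs_trans {P L E X : Type*} (a : Beh P L E X) :
    ∀ b c : Beh P L E X, b ∈ subs a → c ∈ subs b → c ∈ subs a := by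
  induction a using subs.induct with
  | case1 => intro b c hb hc; simp [subs] at *; subst hb; simpa [subs] using hc
  | case2 p e B ih =>
    intro b c hb hc
    simp only [subs, List.mem_cons] at hb ⊢
    rcases hb with rfl | hb
    · simpa [subs] using hc
    · exact Or.inr (ih b c hb hc)
  | case3 p B ih =>
    intro b c hb hc
    simp only [subs, List.mem_cons] at hb ⊢
    rcases hb with rfl | hb
    · simpa [subs] using hc
    · exact Or.inr (ih b c hb hc)
  | case4 p l B ih =>
    intro b c hb hc
    simp only [subs, List.mem_cons] at hb ⊢
    rcases hb with rfl | hb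
    · simpa [subs] using hc
    · exact Or.inr (ih b c hb hc)
  | case5 p bs ih =>
    intro b c hb hc
    simp only [subs, List.mem_cons, List.mem_flatMap, List.mem_attach] at hb ⊢
    rcases hb with rfl | ⟨lb, hlb⟩
    · simpa [subs] using hc
    · exact Or.inr ⟨lb, trivial, ih lb b c hlb.2 hc⟩
  | case6 e B1 B2 ih1 ih2 =>
    intro b c hb hc
    simp only [subs, List.mem_cons, List.mem_append] at hb ⊢
    rcases hb with rfl | hb | hb
    · simpa [subs] using hc
    · exact Or.inr (Or.inl (ih1 b c hb hc))
    · exact Or.inr (Or.inr (ih2 b c hb hc))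
  | case7 x => intro b c hb hc; simp [subs] at *; subst hb; simpa [subs] using hc

theorem step_subs {P L E X : Type*} {D : X → Beh P L E X} {b c : Beh P L E X}
    (h : BStep D b c) : c ∈ subs b ∨ ∃ x, c = D x := by
  cases h with
  | send => exact Or.inl (by simp [subs, self_mem_subs])
  | recv => exact Or.inl (by simp [subs, self_mem_subs])
  | sel => exact Or.inl (by simp [subs, self_mem_subs])
  | branch hmem =>
    refine Or.inl ?_
    simp only [subs, List.mem_cons, List.mem_flatMap, List.mem_attach]
    exact Or.inr ⟨⟨_, hmem⟩, trivial, self_mem_subs _⟩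
  | condT => exact Or.inl (by simp [subs, self_mem_subs])
  | condF => exact Or.inl (by simp [subs, self_mem_subs])
  | unfold => exact Or.inr ⟨_, rfl⟩

theorem reach_fin {P L E X : Type*} [Finite X] (D : X → Beh P L E X) (B : Beh P L E X) :
    {B' | Relation.ReflTransGen (BStep D) B B'}.Finite := by
  have hsub : {B' | Relation.ReflTransGen (BStep D) B B'} ⊆
      {c | c ∈ subs B} ∪ ⋃ x, {c | c ∈ subs (D x)} := by
    intro B' hB'
    simp only [Set.mem_setOf_eq] at hB'
    induction hB' with
    | refl => exact Or.inl (self_mem_subs B)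
    | tail h1 h2 ih =>
      rename_i b c
      rcases step_subs h2 with hc | ⟨x, rfl⟩
      · rcases ih with hb | hb
        · exact Or.inl (subs_trans B b c hb hc)
        · simp only [Set.mem_union, Set.mem_iUnion, Set.mem_setOf_eq] at hb ⊢
          obtain ⟨y, hy⟩ := hb
          exact Or.inr ⟨y, subs_trans (D y) b c hy hc⟩
      · exact Or.inr (Set.mem_iUnion.mpr ⟨x, self_mem_subs (D x)⟩)
  refine Set.Finite.subset ?_ hsub
  exact (List.finite_toSet _).union (Set.finite_iUnion fun x => List.finite_toSet _)

/-- With finitely many procedure names and no spawning, the set of behaviours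
reachable from a behaviour `B` by taking subterms and unfolding procedure
calls is finite; hence the set of networks (finite maps from a fixed finite
set of processes to reachable behaviours) visited by symbolic execution is
finite. -/
theorem stmt12 {P L E X : Type*} [Finite X] [Finite P]
    (D : X → Beh P L E X) (B : Beh P L E X) (N : P → Beh P L E X) :
    {B' | Relation.ReflTransGen (BStep D) B B'}.Finite ∧
    {N' : P → Beh P L E X | ∀ p, Relation.ReflTransGen (BStep D) (N p) (N' p)}.Finite := by
  refine ⟨reach_fin D B, ?_⟩
  have : {N' : P → Beh P L E X | ∀ p, Relation.ReflTransGen (BStep D) (N p) (N' p)} ⊆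
      Set.pi Set.univ (fun p => {B' | Relation.ReflTransGen (BStep D) (N p) B'}) := by
    intro N' hN' p _; exact hN' p
  exact Set.Finite.subset (Set.Finite.pi fun p => reach_fin D (N p)) this
end

section
/- Swapping of independent communications is a congruence generating a confluent rewriting on choreography bodies: the relation generated by rule Eta-Eta (η;η';C ≡ η';η;C when pn(η) ∩ pn(η') = ∅), closed under prefixing and conditional contexts, is symmetric, and any two choreography bodies related by it have the same multiset of interaction prefixes along every maximal path of conditionals. -/
/-- Choreography bodies: `0`, procedure calls, interaction prefixes `η;C`, and
conditionals at a process `ν` with guard `E`. -/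
inductive Ch (η E ν X : Type*) where
  | zero : Ch η E ν X
  | call : X → Ch η E ν X
  | act : η → Ch η E ν X → Ch η E ν X
  | cond : ν → E → Ch η E ν X → Ch η E ν X → Ch η E ν X

/-- The least congruence (w.r.t. prefixing and conditional contexts) generated
by the Eta-Eta swap of adjacent independent interactions, closed under
reflexivity, symmetry and transitivity. -/
inductive EtaEquiv {η E ν X : Type*} (pn : η → Finset ν) :
    Ch η E ν X → Ch η E ν X → Prop
  | swap {h h' : η} {C : Ch η E ν X} : Disjoint (pn h) (pn h') →
      EtaEquiv pn (.act h (.act h' C)) (.act h' (.act h C))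
  | refl (C : Ch η E ν X) : EtaEquiv pn C C
  | symm {C C' : Ch η E ν X} : EtaEquiv pn C C' → EtaEquiv pn C' C
  | trans {C C' C'' : Ch η E ν X} :
      EtaEquiv pn C C' → EtaEquiv pn C' C'' → EtaEquiv pn C C''
  | act (h : η) {C C' : Ch η E ν X} : EtaEquiv pn C C' →
      EtaEquiv pn (.act h C) (.act h C')
  | cond (p : ν) (e : E) {C1 C1' C2 C2' : Ch η E ν X} :
      EtaEquiv pn C1 C1' → EtaEquiv pn C2 C2' →
      EtaEquiv pn (.cond p e C1 C2) (.cond p e C1' C2')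

/-- The multiset of interaction prefixes encountered along the maximal path of
conditionals determined by a branch-choice function `f`. -/
def mlabels {η E ν X : Type*} (f : ν → E → Bool) : Ch η E ν X → Multiset η
  | .zero => 0
  | .call _ => 0
  | .act h C => h ::ₘ mlabels f C
  | .cond p e C1 C2 => if f p e then mlabels f C1 else mlabels f C2

/-- The Eta-Eta swap congruence is symmetric, and any two choreography bodies
related by it have the same multiset of interaction prefixes along every
maximal path of conditionals. -/
theorem stmt17 {η E ν X : Type*} (pn : η → Finset ν) :
    Symmetric (EtaEquiv pn (E := E) (X := X)) ∧
    ∀ (C C' : Ch η E ν X), EtaEquiv pn C C' →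
      ∀ f : ν → E → Bool, mlabels f C = mlabels f C' := by
  constructor
  · exact fun _ _ h => h.symm
  · intro C C' h f
    induction h with
    | swap _ => simp [mlabels, Multiset.cons_swap]
    | refl _ => rfl
    | symm _ ih => exact ih.symm
    | trans _ _ ih1 ih2 => exact ih1.trans ih2
    | act h _ ih => simp [mlabels, ih]
    | cond p e _ _ ih1 ih2 => simp [mlabels, ih1, ih2]
end
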